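/- Let X₀ and Y be nonnegative real random variables on a common probability space, with X₀ integrable, and let σ² > 0. Then E[ ln( 1 + X₀/(Y + σ²) ) ] = ∫_0^∞ ( E[e^{−t Y}] − E[e^{−t (X₀ + Y)}] ) · e^{−σ² t} / t dt, where both sides are finite. -/

import Mathlib

open MeasureTheory ProbabilityTheory Real
open Set

lemma exp_neg_mul_integral {x : ℝ} (hx : 0 < x) :
    ∫ t in Ioi (0:ℝ), Real.exp (-(x * t)) = x⁻¹ := by
  have := MeasureTheory.integral_comp_mul_left_Ioi (fun u => Real.exp (-u)) 0 hx
  simp only [mul_zero, integral_exp_neg_Ioi, neg_zero, Real.exp_zero, smul_eq_mul, mul_one] at this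
  simpa using this

lemma exp_neg_mul_intervalIntegral {t : ℝ} (ht : 0 < t) (a b : ℝ) :
    ∫ x in a..b, Real.exp (-(x * t)) = (Real.exp (-(a * t)) - Real.exp (-(b * t))) / t := by
  have h1 : ∫ x in a..b, Real.exp (-(x * t))
      = t⁻¹ • ∫ u in a * t..b * t, Real.exp (-u) :=
    intervalIntegral.integral_comp_mul_right (fun u => Real.exp (-u)) ht.ne'
  rw [h1]
  have h2 : ∫ u in a * t..b * t, Real.exp (-u) = ∫ v in -(b*t)..-(a*t), Real.exp v := by
    rw [← intervalIntegral.integral_comp_neg (fun v => Real.exp v)]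
  rw [h2, integral_exp]
  rw [smul_eq_mul, div_eq_inv_mul]

lemma frullani_aux {a b : ℝ} (ha : 0 < a) (hab : a ≤ b) :
    Integrable (fun p : ℝ × ℝ => Real.exp (-(p.2 * p.1)))
      ((volume.restrict (Ioi (0:ℝ))).prod (volume.restrict (Ioc a b))) := by
  have hmeas : AEStronglyMeasurable (fun p : ℝ × ℝ => Real.exp (-(p.2 * p.1)))
      ((volume.restrict (Ioi (0:ℝ))).prod (volume.restrict (Ioc a b))) :=
    (Real.continuous_exp.comp (continuous_snd.mul continuous_fst).neg).aestronglyMeasurable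
  have hbd : Integrable (fun p : ℝ × ℝ => Real.exp (-(a * p.1)) * 1)
      ((volume.restrict (Ioi (0:ℝ))).prod (volume.restrict (Ioc a b))) := by
    refine Integrable.mul_prod (f := fun t => Real.exp (-(a * t))) (g := fun _ => (1:ℝ)) ?_ ?_
    · have := exp_neg_integrableOn_Ioi (0:ℝ) ha
      exact this.congr_fun (fun t _ => by ring_nf) measurableSet_Ioi
    · exact integrable_const _
  refine hbd.mono' hmeas ?_
  rw [Measure.prod_restrict]
  refine (ae_restrict_iff' (measurableSet_Ioi.prod measurableSet_Ioc)).2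
    (Filter.Eventually.of_forall ?_)
  rintro ⟨t, x⟩ ⟨ht, hx⟩
  simp only [Real.norm_eq_abs, Real.abs_exp, mul_one]
  exact Real.exp_le_exp.2 (by nlinarith [(show a < x from hx.1), le_of_lt (show (0:ℝ) < t from ht)])

lemma frullani {a b : ℝ} (ha : 0 < a) (hab : a ≤ b) :
    IntegrableOn (fun t => (Real.exp (-(a * t)) - Real.exp (-(b * t))) / t) (Ioi 0) volume ∧
    ∫ t in Ioi (0:ℝ), (Real.exp (-(a * t)) - Real.exp (-(b * t))) / t = Real.log (b / a) := by
  have hb : 0 < b := ha.trans_le hab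
  set μ := volume.restrict (Ioi (0:ℝ))
  set ν := volume.restrict (Ioc a b)
  have hF := frullani_aux ha hab
  -- inner integral over x equals the Frullani integrand, for t > 0
  have hinner : ∀ t ∈ Ioi (0:ℝ),
      (∫ x, Real.exp (-(x * t)) ∂ν) = (Real.exp (-(a * t)) - Real.exp (-(b * t))) / t := by
    intro t ht
    rw [show (∫ x, Real.exp (-(x * t)) ∂ν) = ∫ x in a..b, Real.exp (-(x * t)) from
      (intervalIntegral.integral_of_le hab).symm]
    exact exp_neg_mul_intervalIntegral ht a b
  have hIL : Integrable (fun t => ∫ x, Real.exp (-(x * t)) ∂ν) μ := by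
    have := hF.integral_prod_left
    exact this.congr (Filter.Eventually.of_forall fun t => by simp [ν])
  constructor
  · refine (hIL.congr ?_ : IntegrableOn _ _ _)
    exact (ae_restrict_iff' measurableSet_Ioi).2 (Filter.Eventually.of_forall hinner)
  · have hswap := MeasureTheory.integral_integral_swap
      (f := fun t x => Real.exp (-(x * t))) (μ := μ) (ν := ν) hF
    have h1 : ∫ t in Ioi (0:ℝ), (Real.exp (-(a * t)) - Real.exp (-(b * t))) / t
        = ∫ t, (∫ x, Real.exp (-(x * t)) ∂ν) ∂μ := by
      exact (setIntegral_congr_fun measurableSet_Ioi hinner).symm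
    rw [h1, hswap]
    have h2 : ∀ x ∈ Ioc a b, (∫ t, Real.exp (-(x * t)) ∂μ) = x⁻¹ := by
      intro x hx
      exact exp_neg_mul_integral (ha.trans_le hx.1.le)
    rw [show (∫ x, (∫ t, Real.exp (-(x * t)) ∂μ) ∂ν)
        = ∫ x in Ioc a b, (x:ℝ)⁻¹ from setIntegral_congr_fun measurableSet_Ioc h2,
      ← intervalIntegral.integral_of_le hab]
    exact integral_inv_of_pos ha hb

lemma alg_id (x y s t : ℝ) :
    (Real.exp (-((y + s) * t)) - Real.exp (-((x + y + s) * t))) / t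
      = (Real.exp (-t * y) - Real.exp (-t * (x + y))) * Real.exp (-s * t) / t := by
  rw [show -((y + s) * t) = -t * y + -s * t by ring, Real.exp_add,
    show -((x + y + s) * t) = -t * (x + y) + -s * t by ring, Real.exp_add, sub_mul]

/-- For nonnegative random variables `X₀` (integrable) and `Y` on a common
probability space and noise power `s = σ² > 0`,
`E[ln (1 + X₀ / (Y + s))] = ∫_0^∞ (E[e^{-t Y}] - E[e^{-t (X₀ + Y)}]) e^{-s t} / t dt`,
and both sides are finite (integrable). -/
theorem stmt_12 {Ω : Type*} [MeasureSpace Ω] [IsProbabilityMeasure (ℙ : Measure Ω)]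
    (X₀ Y : Ω → ℝ) (hX₀_meas : Measurable X₀) (hY_meas : Measurable Y)
    (hX₀_nonneg : ∀ ω, 0 ≤ X₀ ω) (hY_nonneg : ∀ ω, 0 ≤ Y ω)
    (hX₀_int : Integrable X₀ ℙ)
    (s : ℝ) (hs : 0 < s) :
    Integrable (fun ω => Real.log (1 + X₀ ω / (Y ω + s))) ℙ ∧
    IntegrableOn
      (fun t => ((∫ ω, Real.exp (-t * Y ω)) - ∫ ω, Real.exp (-t * (X₀ ω + Y ω)))
        * Real.exp (-s * t) / t) (Set.Ioi (0 : ℝ)) volume ∧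
    ∫ ω, Real.log (1 + X₀ ω / (Y ω + s))
      = ∫ t in Set.Ioi (0 : ℝ),
          ((∫ ω, Real.exp (-t * Y ω)) - ∫ ω, Real.exp (-t * (X₀ ω + Y ω)))
            * Real.exp (-s * t) / t := by
  set ν := volume.restrict (Ioi (0:ℝ)) with hν
  set g : Ω × ℝ → ℝ := fun p =>
    (Real.exp (-p.2 * Y p.1) - Real.exp (-p.2 * (X₀ p.1 + Y p.1)))
      * Real.exp (-s * p.2) / p.2 with hgdef
  have ha : ∀ ω, 0 < Y ω + s := fun ω => by linarith [hY_nonneg ω]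
  have hab : ∀ ω, Y ω + s ≤ X₀ ω + Y ω + s := fun ω => by linarith [hX₀_nonneg ω]
  have halg : ∀ ω t, g (ω, t)
      = (Real.exp (-((Y ω + s) * t)) - Real.exp (-((X₀ ω + Y ω + s) * t))) / t := by
    intro ω t; rw [alg_id]
  have hlog : ∀ ω, Real.log (1 + X₀ ω / (Y ω + s))
      = Real.log ((X₀ ω + Y ω + s) / (Y ω + s)) := by
    intro ω
    congr 1
    rw [eq_div_iff (ha ω).ne', add_mul, one_mul, div_mul_cancel₀ _ (ha ω).ne']
    ring
  -- Part 1: integrability of the log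
  have hlog_meas : Measurable (fun ω => Real.log (1 + X₀ ω / (Y ω + s))) := by
    apply Real.measurable_log.comp
    exact (measurable_const.add (hX₀_meas.div (hY_meas.add measurable_const)))
  have part1 : Integrable (fun ω => Real.log (1 + X₀ ω / (Y ω + s))) ℙ := by
    refine Integrable.mono' (hX₀_int.div_const s) hlog_meas.aestronglyMeasurable
      (Filter.Eventually.of_forall fun ω => ?_)
    have h0 : 0 ≤ X₀ ω / (Y ω + s) := div_nonneg (hX₀_nonneg ω) (ha ω).le
    have h1 : Real.log (1 + X₀ ω / (Y ω + s)) ≤ X₀ ω / (Y ω + s) := by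
      have := Real.log_le_sub_one_of_pos (by linarith : (0:ℝ) < 1 + X₀ ω / (Y ω + s))
      linarith
    have h2 : X₀ ω / (Y ω + s) ≤ X₀ ω / s := by
      apply div_le_div_of_nonneg_left (hX₀_nonneg ω) hs
      linarith [hY_nonneg ω]
    rw [Real.norm_eq_abs, abs_of_nonneg (Real.log_nonneg (by linarith))]
    linarith
  -- per-ω facts from Frullani
  have hωint : ∀ ω, Integrable (fun t => g (ω, t)) ν := by
    intro ω
    have := (frullani (ha ω) (hab ω)).1
    exact this.congr (Filter.Eventually.of_forall fun t => (halg ω t).symm)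
  have hωval : ∀ ω, ∫ t, g (ω, t) ∂ν = Real.log (1 + X₀ ω / (Y ω + s)) := by
    intro ω
    have h1 : ∫ t, g (ω, t) ∂ν
        = ∫ t in Ioi (0:ℝ),
            (Real.exp (-((Y ω + s) * t)) - Real.exp (-((X₀ ω + Y ω + s) * t))) / t :=
      integral_congr_ae (Filter.Eventually.of_forall fun t => halg ω t)
    rw [h1, (frullani (ha ω) (hab ω)).2, hlog ω]
  have hg_nonneg : ∀ ω, ∀ t ∈ Ioi (0:ℝ), 0 ≤ g (ω, t) := by
    intro ω t ht
    rw [halg]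
    apply div_nonneg _ ht.le
    have : (Y ω + s) * t ≤ (X₀ ω + Y ω + s) * t := by
      exact mul_le_mul_of_nonneg_right (hab ω) ht.le
    simp only [sub_nonneg, Real.exp_le_exp]
    linarith
  -- product integrability
  have hgmeas : Measurable g := by
    apply Measurable.div _ measurable_snd
    apply Measurable.mul
    · apply Measurable.sub
      · exact Real.measurable_exp.comp (measurable_snd.neg.mul (hY_meas.comp measurable_fst))
      · exact Real.measurable_exp.comp
          (measurable_snd.neg.mul ((hX₀_meas.add hY_meas).comp measurable_fst))
    · exact Real.measurable_exp.comp (measurable_snd.const_mul (-s))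
  have hprod : Integrable g ((ℙ : Measure Ω).prod ν) := by
    refine (integrable_prod_iff hgmeas.aestronglyMeasurable).2
      ⟨Filter.Eventually.of_forall hωint, ?_⟩
    have heq : ∀ ω, ∫ t, ‖g (ω, t)‖ ∂ν = Real.log (1 + X₀ ω / (Y ω + s)) := by
      intro ω
      rw [← hωval ω]
      refine integral_congr_ae ?_
      refine (ae_restrict_iff' measurableSet_Ioi).2 (Filter.Eventually.of_forall fun t ht => ?_)
      exact Real.norm_of_nonneg (hg_nonneg ω t ht)
    exact part1.congr (Filter.Eventually.of_forall fun ω => (heq ω).symm)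
  -- integrability of exponentials in ω for fixed t ≥ 0
  have hEint : ∀ (Z : Ω → ℝ), Measurable Z → (∀ ω, 0 ≤ Z ω) → ∀ t : ℝ, 0 ≤ t →
      Integrable (fun ω => Real.exp (-t * Z ω)) ℙ := by
    intro Z hZ hZ0 t ht
    refine Integrable.mono' (integrable_const 1)
      (Real.measurable_exp.comp (hZ.const_mul (-t))).aestronglyMeasurable
      (Filter.Eventually.of_forall fun ω => ?_)
    rw [Real.norm_eq_abs, Real.abs_exp]
    exact Real.exp_le_one_iff.2 (by nlinarith [hZ0 ω])
  -- pointwise identity for the inner ω-integral, t > 0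
  have hTeq : ∀ t ∈ Ioi (0:ℝ), (∫ ω, g (ω, t) ∂ℙ)
      = ((∫ ω, Real.exp (-t * Y ω)) - ∫ ω, Real.exp (-t * (X₀ ω + Y ω)))
          * Real.exp (-s * t) / t := by
    intro t ht
    have h1 : ∀ ω, g (ω, t)
        = (Real.exp (-t * Y ω) - Real.exp (-t * (X₀ ω + Y ω))) * (Real.exp (-s * t) / t) := by
      intro ω; simp only [hgdef]; ring
    simp_rw [h1]
    rw [integral_mul_const, integral_sub (hEint Y hY_meas hY_nonneg t ht.le)
      (hEint (fun ω => X₀ ω + Y ω) (hX₀_meas.add hY_meas)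
        (fun ω => add_nonneg (hX₀_nonneg ω) (hY_nonneg ω)) t ht.le), mul_div_assoc]
  have hInt2 : Integrable (fun t => ∫ ω, g (ω, t) ∂ℙ) ν := hprod.integral_prod_right
  refine ⟨part1, ?_, ?_⟩
  · refine (hInt2.congr ?_ : IntegrableOn _ _ _)
    exact (ae_restrict_iff' measurableSet_Ioi).2 (Filter.Eventually.of_forall hTeq)
  · have hswap := MeasureTheory.integral_integral_swap
      (f := fun ω t => g (ω, t)) (μ := (ℙ : Measure Ω)) (ν := ν) hprod
    calc ∫ ω, Real.log (1 + X₀ ω / (Y ω + s))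
        = ∫ ω, ∫ t, g (ω, t) ∂ν ∂ℙ := by
          exact integral_congr_ae (Filter.Eventually.of_forall fun ω => (hωval ω).symm)
      _ = ∫ t, ∫ ω, g (ω, t) ∂ℙ ∂ν := hswap
      _ = _ := setIntegral_congr_fun measurableSet_Ioi hTeq
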